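/- If G is a finite graph in which every vertex has degree at least 2, then the bandwidth of G is at most the edge-bandwidth of G. -/

import Mathlib

open SimpleGraph

/-- The edge-bandwidth of a finite simple graph: the minimum over injective integer
labelings of the edges of the maximum difference of labels on incident edges. -/
noncomputable def edgeBW {V : Type*} [Fintype V] (G : SimpleGraph V) : ℕ :=
  sInf {k : ℕ | ∃ f : G.edgeSet → ℤ, Function.Injective f ∧
    ∀ e e' : G.edgeSet, e ≠ e' → (∃ v, v ∈ (e : Sym2 V) ∧ v ∈ (e' : Sym2 V)) →
      ((f e - f e').natAbs ≤ k)}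

/-- The bandwidth of a finite simple graph: the minimum over injective integer
labelings of the vertices of the maximum difference of labels on adjacent vertices. -/
noncomputable def bw {V : Type*} [Fintype V] (G : SimpleGraph V) : ℕ :=
  sInf {k : ℕ | ∃ g : V → ℤ, Function.Injective g ∧
    ∀ u v, G.Adj u v → (g u - g v).natAbs ≤ k}
theorem bw_le_edgeBW_of_minDegree_two {V : Type*} [Fintype V] (G : SimpleGraph V)
    [DecidableRel G.Adj] (h : ∀ v, 2 ≤ G.degree v) :
    bw G ≤ edgeBW G := by
  classical
  haveI : Fintype G.edgeSet := Fintype.ofFinite _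
  -- The defining set of `edgeBW` is nonempty.
  have hne : {k : ℕ | ∃ f : G.edgeSet → ℤ, Function.Injective f ∧
      ∀ e e' : G.edgeSet, e ≠ e' → (∃ v, v ∈ (e : Sym2 V) ∧ v ∈ (e' : Sym2 V)) →
        ((f e - f e').natAbs ≤ k)}.Nonempty := by
    refine ⟨Fintype.card G.edgeSet,
      fun e => ((Fintype.equivFin G.edgeSet e : ℕ) : ℤ), ?_, ?_⟩
    · intro e e' hee
      dsimp only at hee
      apply (Fintype.equivFin G.edgeSet).injective
      apply Fin.val_injective
      exact_mod_cast hee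
    · intro e e' _ _
      dsimp only
      have h1 := (Fintype.equivFin G.edgeSet e).isLt
      have h2 := (Fintype.equivFin G.edgeSet e').isLt
      omega
  have hmem : edgeBW G ∈ {k : ℕ | ∃ f : G.edgeSet → ℤ, Function.Injective f ∧
      ∀ e e' : G.edgeSet, e ≠ e' → (∃ v, v ∈ (e : Sym2 V) ∧ v ∈ (e' : Sym2 V)) →
        ((f e - f e').natAbs ≤ k)} := by
    rw [edgeBW]; exact Nat.sInf_mem hne
  obtain ⟨f, hfinj, hf⟩ := hmem
  -- incidence finsets
  set t : V → Finset G.edgeSet :=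
    fun v => Finset.univ.filter (fun e => v ∈ (e : Sym2 V)) with ht
  have htmem : ∀ (v : V) (e : G.edgeSet), e ∈ t v ↔ v ∈ (e : Sym2 V) := by
    intro v e; simp [ht]
  have htwo : ∀ v, 2 ≤ (t v).card := by
    intro v
    have hdeg : 1 < (G.neighborFinset v).card := h v
    obtain ⟨a, ha, b, hb, hab⟩ := Finset.one_lt_card.mp hdeg
    rw [SimpleGraph.mem_neighborFinset] at ha hb
    refine Finset.one_lt_card.mpr
      ⟨⟨s(v, a), ha⟩, ?_, ⟨s(v, b), hb⟩, ?_, ?_⟩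
    · rw [htmem]; exact Sym2.mem_mk_left v a
    · rw [htmem]; exact Sym2.mem_mk_left v b
    · intro hcon
      apply hab
      have : s(v, a) = s(v, b) := congrArg Subtype.val hcon
      exact Sym2.congr_right.mp this
  -- Hall's condition by double counting
  have hall : ∀ s : Finset V, s.card ≤ (s.biUnion t).card := by
    intro s
    have hdouble : ∑ v ∈ s, (t v).card ≤ 2 * (s.biUnion t).card := by
      have hsub : ∀ v ∈ s, t v ⊆ s.biUnion t :=
        fun v hv => Finset.subset_biUnion_of_mem t hv
      calc ∑ v ∈ s, (t v).card
          = ∑ v ∈ s, ∑ e ∈ s.biUnion t, (if e ∈ t v then 1 else 0) := by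
            refine Finset.sum_congr rfl fun v hv => ?_
            rw [← Finset.card_filter, Finset.filter_mem_eq_inter,
              Finset.inter_eq_right.mpr (hsub v hv)]
        _ = ∑ e ∈ s.biUnion t, ∑ v ∈ s, (if e ∈ t v then 1 else 0) :=
            Finset.sum_comm
        _ ≤ ∑ _e ∈ s.biUnion t, 2 := by
            refine Finset.sum_le_sum fun e _ => ?_
            rw [← Finset.card_filter]
            obtain ⟨⟨x, y⟩, hxy⟩ := Quot.exists_rep (e : Sym2 V)
            have hxy' : (e : Sym2 V) = s(x, y) := hxy.symm
            have hsub2 : s.filter (fun v => e ∈ t v) ⊆ {x, y} := by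
              intro v hv
              rw [Finset.mem_filter] at hv
              have hv2 : v ∈ (e : Sym2 V) := (htmem v e).mp hv.2
              rw [hxy', Sym2.mem_iff] at hv2
              simpa using hv2
            calc (s.filter (fun v => e ∈ t v)).card
                ≤ ({x, y} : Finset V).card := Finset.card_le_card hsub2
              _ ≤ 2 := by
                  have := Finset.card_insert_le x ({y} : Finset V)
                  simpa using this
        _ = 2 * (s.biUnion t).card := by
            rw [Finset.sum_const, smul_eq_mul, mul_comm]
    have hlow : 2 * s.card ≤ ∑ v ∈ s, (t v).card := by
      calc 2 * s.card = ∑ _v ∈ s, 2 := by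
            rw [Finset.sum_const, smul_eq_mul, mul_comm]
        _ ≤ ∑ v ∈ s, (t v).card := Finset.sum_le_sum fun v _ => htwo v
    omega
  obtain ⟨ε0, hε0inj, hε0mem⟩ :=
    (Finset.all_card_le_biUnion_card_iff_exists_injective t).mp hall
  -- minimize the sum of labels over valid assignments
  set S : Set (V → G.edgeSet) :=
    {ε | Function.Injective ε ∧ ∀ v, v ∈ ((ε v : G.edgeSet) : Sym2 V)} with hS
  have hSne : S.Nonempty := ⟨ε0, hε0inj, fun v => (htmem v (ε0 v)).mp (hε0mem v)⟩
  obtain ⟨ε, hεS, hεmin⟩ :=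
    Set.exists_min_image S (fun ε => ∑ v, f (ε v)) (Set.toFinite S) hSne
  obtain ⟨hεinj, hεmem⟩ := hεS
  -- stability property
  have P : ∀ (v : V) (a : G.edgeSet), v ∈ (a : Sym2 V) → f a < f (ε v) →
      ∃ w, ε w = a := by
    intro v a hva hlt
    by_contra hcon
    push_neg at hcon
    have hS' : Function.update ε v a ∈ S := by
      constructor
      · intro x y hxy
        rcases eq_or_ne x v with rfl | hx
        · rcases eq_or_ne y x with rfl | hy
          · rfl
          · rw [Function.update_self, Function.update_of_ne hy] at hxy
            exact absurd hxy.symm (hcon y)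
        · rcases eq_or_ne y v with rfl | hy
          · rw [Function.update_self, Function.update_of_ne hx] at hxy
            exact absurd hxy (hcon x)
          · rw [Function.update_of_ne hx, Function.update_of_ne hy] at hxy
            exact hεinj hxy
      · intro w
        rcases eq_or_ne w v with rfl | hw
        · rw [Function.update_self]; exact hva
        · rw [Function.update_of_ne hw]; exact hεmem w
    have hlt2 : ∑ w, f (Function.update ε v a w) < ∑ w, f (ε w) := by
      rw [← Finset.add_sum_erase _ (fun w => f (Function.update ε v a w))
        (Finset.mem_univ v),
        ← Finset.add_sum_erase _ (fun w => f (ε w)) (Finset.mem_univ v)]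
      have hrest : ∑ w ∈ Finset.univ.erase v, f (Function.update ε v a w)
          = ∑ w ∈ Finset.univ.erase v, f (ε w) := by
        refine Finset.sum_congr rfl fun w hw => ?_
        rw [Function.update_of_ne (Finset.ne_of_mem_erase hw)]
      rw [hrest, Function.update_self]
      exact add_lt_add_left hlt _
    exact absurd (hεmin _ hS') (not_le.mpr hlt2)
  -- the key one-sided bound
  have key : ∀ u v, G.Adj u v → f (ε u) - f (ε v) ≤ (edgeBW G : ℤ) := by
    intro u v huv
    set a : G.edgeSet := ⟨s(u, v), huv⟩ with ha
    have hua : u ∈ (a : Sym2 V) := Sym2.mem_mk_left u v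
    have hva : v ∈ (a : Sym2 V) := Sym2.mem_mk_right u v
    rcases le_or_gt (f (ε u)) (f a) with hle | hlt
    · rcases eq_or_ne (ε v) a with heq | hne2
      · rw [heq]; omega
      · have := hf (ε v) a hne2 ⟨v, hεmem v, hva⟩
        omega
    · obtain ⟨w, hw⟩ := P u a hua hlt
      have hwa : w ∈ (a : Sym2 V) := hw ▸ hεmem w
      have hwuv : w = u ∨ w = v := by
        have : w ∈ s(u, v) := hwa
        rwa [Sym2.mem_iff] at this
      have hεu_ne : ε u ≠ a := fun hc => by rw [hc] at hlt; omega
      have hεv : ε v = a := by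
        rcases hwuv with rfl | rfl
        · exact absurd hw hεu_ne
        · exact hw
      have := hf (ε u) a hεu_ne ⟨u, hεmem u, hua⟩
      rw [hεv]
      omega
  rw [bw]
  apply Nat.sInf_le
  refine ⟨fun v => f (ε v), hfinj.comp hεinj, fun u v huv => ?_⟩
  dsimp only
  have h1 := key u v huv
  have h2 := key v u huv.symm
  omega
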